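/- Let Ω be an admissible polynomial, let n ≥ 1 be an integer, and let 0 < R₁ < R₂ be real numbers. For i = 1, 2, let Π_i be a monic real polynomial of degree n such that ∫ Π_i·q dμ_{R_i}^Ω = 0 for every real polynomial q of degree less than n, and suppose Π_i has n real zeros λ_{1}(R_i) < λ_{2}(R_i) < … < λ_{n}(R_i) (so Π_i(x) = ∏_{k=1}^{n} (x − λ_k(R_i))). Then λ_k(R₁) < λ_k(R₂) for every k = 1, …, n; that is, each zero of the degree-n orthogonal polynomial with respect to the Christoffel transform measure μ_R^Ω is a strictly increasing function of the parameter R. -/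

import Mathlib

open Polynomial

noncomputable section

/-- A nonzero real polynomial is admissible if it is nonnegative on all the integers. -/
def Admissible (P : Polynomial ℝ) : Prop :=
  P ≠ 0 ∧ ∀ j : ℤ, 0 ≤ P.eval (j : ℝ)

/-- Integral of a polynomial against the Christoffel transform measure `μ_R^Ω`. -/
def chInt (Ω : Polynomial ℝ) (R : ℝ) (f : Polynomial ℝ) : ℝ :=
  ∑' j : ℕ, Real.exp (-R) * f.eval (j : ℝ) * Ω.eval (j : ℝ) * R ^ j / (Nat.factorial j : ℝ)


lemma poly_bound (p : Polynomial ℝ) : ∃ C : ℝ, 0 ≤ C ∧ ∀ x : ℝ, 0 ≤ x →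
    |p.eval x| ≤ C * (1 + x) ^ p.natDegree := by
  refine ⟨∑ i ∈ Finset.range (p.natDegree + 1), |p.coeff i|, Finset.sum_nonneg fun _ _ => abs_nonneg _, fun x hx => ?_⟩
  rw [Polynomial.eval_eq_sum_range, Finset.sum_mul]
  refine (Finset.abs_sum_le_sum_abs _ _).trans (Finset.sum_le_sum fun i hi => ?_)
  rw [abs_mul, abs_pow, abs_of_nonneg hx]
  refine mul_le_mul_of_nonneg_left ?_ (abs_nonneg _)
  have hi' : i ≤ p.natDegree := Nat.lt_succ_iff.mp (Finset.mem_range.mp hi)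
  calc x ^ i ≤ (1 + x) ^ i := pow_le_pow_left₀ hx (by linarith) i
    _ ≤ (1 + x) ^ p.natDegree := pow_le_pow_right₀ (by linarith) hi'

lemma summable_pow_mul (d : ℕ) (r : ℝ) (hr : 0 ≤ r) :
    Summable (fun j : ℕ => (1 + (j:ℝ)) ^ d * r ^ j / (Nat.factorial j : ℝ)) := by
  apply summable_of_ratio_norm_eventually_le (r := 1/2) (by norm_num)
  filter_upwards [Filter.eventually_ge_atTop (Nat.ceil ((2:ℝ)^(d+1) * r))] with j hj
  have hfac : (0:ℝ) < j.factorial := by positivity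
  have h1 : (0:ℝ) ≤ (1 + (j:ℝ))^d := by positivity
  have hjr : (2:ℝ)^(d+1) * r ≤ (j:ℝ) + 1 := by
    have h := le_trans (Nat.le_ceil ((2:ℝ)^(d+1) * r)) (by exact_mod_cast hj : (⌈(2:ℝ)^(d+1)*r⌉₊:ℝ) ≤ (j:ℝ))
    linarith
  have h3 : (1 + (j:ℝ))^d * (2^(d+1)*r) ≤ (1+(j:ℝ))^d * ((j:ℝ)+1) := mul_le_mul_of_nonneg_left hjr h1
  have h4 : 2^d * (1+(j:ℝ))^d * r * 2 ≤ (1+(j:ℝ))^d * ((j:ℝ)+1) := by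
    calc 2^d * (1+(j:ℝ))^d * r * 2 = (1 + (j:ℝ))^d * (2^(d+1)*r) := by ring
      _ ≤ (1+(j:ℝ))^d * ((j:ℝ)+1) := h3
  have key : (1 + ((j:ℝ)+1))^d * r ≤ 1/2 * ((1 + (j:ℝ))^d * ((j:ℝ)+1)) := by
    have h2 : (1 + ((j:ℝ) + 1)) ^ d ≤ 2 ^ d * (1 + (j:ℝ)) ^ d := by
      rw [← mul_pow]
      apply pow_le_pow_left₀ (by positivity) (by linarith)
    calc (1 + ((j:ℝ)+1))^d * r ≤ 2^d * (1 + (j:ℝ))^d * r := mul_le_mul_of_nonneg_right h2 hr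
      _ ≤ 1/2 * ((1 + (j:ℝ))^d * ((j:ℝ)+1)) := by linarith
  rw [Real.norm_eq_abs, Real.norm_eq_abs, abs_of_nonneg (by positivity), abs_of_nonneg (by positivity)]
  push_cast
  rw [Nat.factorial_succ]
  push_cast
  rw [div_le_iff₀ (by positivity)]
  calc (1 + ((j:ℝ) + 1)) ^ d * r ^ (j + 1) = ((1 + ((j:ℝ)+1))^d * r) * r ^ j := by ring
    _ ≤ (1/2 * ((1 + (j:ℝ))^d * ((j:ℝ)+1))) * r ^ j := mul_le_mul_of_nonneg_right key (by positivity)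
    _ = 1/2 * ((1 + (j:ℝ))^d * r^j / (j.factorial:ℝ)) * (((j:ℝ)+1) * (j.factorial:ℝ)) := by
        field_simp

lemma summable_poly_abs (p : Polynomial ℝ) (R : ℝ) :
    Summable (fun j : ℕ => |p.eval (j:ℝ)| * |R| ^ j / (Nat.factorial j : ℝ)) := by
  obtain ⟨C, hC, hbound⟩ := poly_bound p
  refine Summable.of_nonneg_of_le (fun j => by positivity) (fun j => ?_)
    ((summable_pow_mul p.natDegree |R| (abs_nonneg R)).mul_left C)
  have := hbound (j:ℝ) (Nat.cast_nonneg j)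
  have hpow : (0:ℝ) ≤ |R| ^ j := by positivity
  have hfac : (0:ℝ) < j.factorial := by positivity
  have h2 : |p.eval (j:ℝ)| * |R| ^ j ≤ C * ((1+(j:ℝ))^p.natDegree * |R|^j) := by
    calc |p.eval (j:ℝ)| * |R| ^ j ≤ (C * (1+(j:ℝ))^p.natDegree) * |R|^j :=
          mul_le_mul_of_nonneg_right this hpow
      _ = C * ((1+(j:ℝ))^p.natDegree * |R|^j) := by ring
  rw [div_le_iff₀ hfac]
  calc |p.eval (j:ℝ)| * |R| ^ j ≤ C * ((1 + (j:ℝ)) ^ p.natDegree * |R| ^ j) := h2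
    _ = C * ((1 + (j:ℝ)) ^ p.natDegree * |R| ^ j / (j.factorial:ℝ)) * (j.factorial:ℝ) := by
        field_simp
  
lemma summable_poly (p : Polynomial ℝ) (R : ℝ) :
    Summable (fun j : ℕ => p.eval (j:ℝ) * R ^ j / (Nat.factorial j : ℝ)) := by
  have := summable_poly_abs p R
  refine Summable.of_abs ?_
  refine this.congr fun j => ?_
  rw [abs_div, abs_mul, abs_pow, Nat.abs_cast]

namespace chAux
variable (Ω : Polynomial ℝ) (R : ℝ)

/-- the term of the chInt series -/
noncomputable def term (f : Polynomial ℝ) (j : ℕ) : ℝ :=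
  Real.exp (-R) * f.eval (j : ℝ) * Ω.eval (j : ℝ) * R ^ j / (Nat.factorial j : ℝ)

lemma chInt_eq_tsum_term (f : Polynomial ℝ) : chInt Ω R f = ∑' j, term Ω R f j := rfl

lemma term_eq (f : Polynomial ℝ) (j : ℕ) :
    term Ω R f j = Real.exp (-R) * ((f * Ω).eval (j:ℝ) * R ^ j / (Nat.factorial j : ℝ)) := by
  simp only [term, eval_mul]; ring

lemma summable_term (f : Polynomial ℝ) : Summable (term Ω R f) := by
  simp only [funext (term_eq Ω R f)]
  exact (summable_poly (f * Ω) R).mul_left _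

lemma term_add (f g : Polynomial ℝ) (j : ℕ) :
    term Ω R (f + g) j = term Ω R f j + term Ω R g j := by
  simp only [term, eval_add]; ring

lemma term_smul (a : ℝ) (f : Polynomial ℝ) (j : ℕ) :
    term Ω R (a • f) j = a * term Ω R f j := by
  simp only [term, eval_smul, smul_eq_mul]; ring

noncomputable def chL : Polynomial ℝ →ₗ[ℝ] ℝ where
  toFun f := chInt Ω R f
  map_add' f g := by
    simp only [chInt_eq_tsum_term, funext (term_add Ω R f g)]
    exact Summable.tsum_add (summable_term Ω R f) (summable_term Ω R g)
  map_smul' a f := by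
    simp only [chInt_eq_tsum_term, funext (term_smul Ω R a f), RingHom.id_apply, smul_eq_mul]
    exact tsum_mul_left

lemma chL_apply (f : Polynomial ℝ) : chL Ω R f = chInt Ω R f := rfl

lemma chInt_Cmul (a : ℝ) (f : Polynomial ℝ) : chInt Ω R (C a * f) = a * chInt Ω R f := by
  rw [← smul_eq_C_mul, ← chL_apply, map_smul, chL_apply, smul_eq_mul]

end chAux

/-- a nonzero real polynomial has a non-root natural number -/
lemma exists_nat_not_root {p : Polynomial ℝ} (hp : p ≠ 0) : ∃ j : ℕ, p.eval (j:ℝ) ≠ 0 := by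
  by_contra h
  push_neg at h
  apply hp
  apply Polynomial.eq_zero_of_infinite_isRoot
  exact Set.infinite_of_injective_forall_mem (f := fun j : ℕ => (j : ℝ))
    Nat.cast_injective (fun j => h j)

namespace chAux

lemma chInt_smul (Ω : Polynomial ℝ) (R : ℝ) (a : ℝ) (f : Polynomial ℝ) :
    chInt Ω R (a • f) = a * chInt Ω R f := by
  rw [← chL_apply, map_smul, chL_apply, smul_eq_mul]

variable {Ω : Polynomial ℝ}

lemma Ω_nonneg (hΩ : Admissible Ω) (j : ℕ) : 0 ≤ Ω.eval (j:ℝ) := by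
  have := hΩ.2 (j : ℤ)
  simpa using this

lemma term_sq_nonneg (hΩ : Admissible Ω) {R : ℝ} (hR : 0 ≤ R) (p : Polynomial ℝ) (j : ℕ) :
    0 ≤ term Ω R (p * p) j := by
  have h1 := Ω_nonneg hΩ j
  have h2 : 0 ≤ p.eval (j:ℝ) * p.eval (j:ℝ) := mul_self_nonneg _
  have h3 : 0 ≤ R ^ j := pow_nonneg hR j
  have h4 : (0:ℝ) ≤ j.factorial := Nat.cast_nonneg _
  simp only [term, eval_mul]
  apply div_nonneg _ h4
  exact mul_nonneg (mul_nonneg (mul_nonneg (Real.exp_pos _).le h2) h1) h3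

lemma chInt_sq_nonneg (hΩ : Admissible Ω) {R : ℝ} (hR : 0 ≤ R) (p : Polynomial ℝ) :
    0 ≤ chInt Ω R (p * p) := by
  rw [chInt_eq_tsum_term]
  exact tsum_nonneg (term_sq_nonneg hΩ hR p)

lemma term_sq_pos (hΩ : Admissible Ω) {R : ℝ} (hR : 0 < R) {p : Polynomial ℝ} {j : ℕ}
    (hΩj : Ω.eval (j:ℝ) ≠ 0) (hpj : p.eval (j:ℝ) ≠ 0) : 0 < term Ω R (p * p) j := by
  have h1 : 0 < Ω.eval (j:ℝ) := lt_of_le_of_ne (Ω_nonneg hΩ j) (Ne.symm hΩj)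
  have h2 : 0 < p.eval (j:ℝ) * p.eval (j:ℝ) := by
    rcases hpj.lt_or_gt with h | h
    · exact mul_pos_of_neg_of_neg h h
    · exact mul_pos h h
  have h3 : (0:ℝ) < j.factorial := by positivity
  simp only [term, eval_mul]
  have h4 : 0 < R ^ j := pow_pos hR j
  positivity

lemma chInt_sq_pos (hΩ : Admissible Ω) {R : ℝ} (hR : 0 < R) {p : Polynomial ℝ} (hp : p ≠ 0) :
    0 < chInt Ω R (p * p) := by
  obtain ⟨j, hj⟩ := exists_nat_not_root (mul_ne_zero hΩ.1 hp)
  rw [eval_mul, mul_ne_zero_iff] at hj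
  rw [chInt_eq_tsum_term]
  exact Summable.tsum_pos (summable_term Ω R _) (term_sq_nonneg hΩ hR.le p) j
    (term_sq_pos hΩ hR hj.1 hj.2)

/-- The key monotone-likelihood-ratio strict inequality. -/
lemma cross (hΩ : Admissible Ω) {R₁ R₂ : ℝ} (h1 : 0 < R₁) (h12 : R₁ < R₂) {p : Polynomial ℝ}
    (hp : p ≠ 0) :
    chInt Ω R₁ (X * (p * p)) * chInt Ω R₂ (p * p) <
      chInt Ω R₂ (X * (p * p)) * chInt Ω R₁ (p * p) := by
  set N₁ := chInt Ω R₁ (p * p) with hN₁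
  have hN₁pos : 0 < N₁ := chInt_sq_pos hΩ h1 hp
  set A₁ := chInt Ω R₁ (X * (p * p)) with hA₁
  set c : ℝ := A₁ / N₁ with hc
  set q : Polynomial ℝ := (X - C c) * (p * p) with hq
  -- chInt R₁ q = 0
  have hsplit : ∀ R : ℝ, chInt Ω R q = chInt Ω R (X * (p*p)) - c * chInt Ω R (p*p) := by
    intro R
    have : q = X * (p*p) - C c * (p*p) := by rw [hq]; ring
    rw [this, ← chL_apply, map_sub, chL_apply, chL_apply, chInt_Cmul]
  have hq₁ : chInt Ω R₁ q = 0 := by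
    rw [hsplit]
    rw [← hA₁, ← hN₁, hc, div_mul_cancel₀ _ (ne_of_gt hN₁pos), sub_self]
  -- key positivity: chInt Ω R₂ q > 0
  have hb : 1 < R₂ / R₁ := (one_lt_div h1).mpr h12
  set G : ℝ → ℝ := fun y => Real.exp (R₁ - R₂) * (R₂ / R₁) ^ y with hG
  have hGmono : StrictMono G := by
    intro a b hab
    exact mul_lt_mul_of_pos_left ((Real.rpow_lt_rpow_left_iff hb).mpr hab) (Real.exp_pos _)
  have hterm : ∀ j : ℕ, term Ω R₂ q j = G j * term Ω R₁ q j := by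
    intro j
    simp only [term, hG, Real.rpow_natCast]
    rw [div_pow]
    have hR1 : (R₁:ℝ) ^ j ≠ 0 := pow_ne_zero _ (ne_of_gt h1)
    have hexp : Real.exp (R₁ - R₂) * Real.exp (-R₁) = Real.exp (-R₂) := by
      rw [← Real.exp_add]; ring_nf
    rw [← hexp]
    field_simp
  have hfact : ∀ j : ℕ, term Ω R₁ q j = ((j:ℝ) - c) * term Ω R₁ (p*p) j := by
    intro j
    simp only [term, hq, eval_mul, eval_sub, eval_X, eval_C]
    ring
  have htnn : ∀ j : ℕ, 0 ≤ term Ω R₁ (p*p) j := term_sq_nonneg hΩ h1.le p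
  set D : ℕ → ℝ := fun j => term Ω R₂ q j - G c * term Ω R₁ q j with hD
  have hDsum : Summable D := (summable_term Ω R₂ q).sub ((summable_term Ω R₁ q).mul_left (G c))
  have hDeq : ∀ j : ℕ, D j = (G j - G c) * (((j:ℝ) - c) * term Ω R₁ (p*p) j) := by
    intro j
    simp only [hD]
    rw [hterm j, hfact j]
    ring
  have hDnonneg : ∀ j : ℕ, 0 ≤ D j := by
    intro j
    rw [hDeq j]
    rcases le_or_gt c ((j:ℝ)) with h | h
    · exact mul_nonneg (sub_nonneg.mpr (hGmono.monotone h))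
        (mul_nonneg (sub_nonneg.mpr h) (htnn j))
    · have ha : G (j:ℝ) - G c ≤ 0 := sub_nonpos.mpr (hGmono.monotone h.le)
      have hb' : ((j:ℝ) - c) * term Ω R₁ (p*p) j ≤ 0 :=
        mul_nonpos_of_nonpos_of_nonneg (sub_nonpos.mpr h.le) (htnn j)
      have := mul_nonneg (neg_nonneg.mpr ha) (neg_nonneg.mpr hb')
      rwa [neg_mul_neg] at this
  -- strict positivity at a good index
  obtain ⟨j₀, hj₀⟩ := exists_nat_not_root
    (mul_ne_zero (X_sub_C_ne_zero c) (mul_ne_zero hp hΩ.1) :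
      ((X - C c) * (p * Ω) : Polynomial ℝ) ≠ 0)
  rw [eval_mul, eval_mul, mul_ne_zero_iff, mul_ne_zero_iff] at hj₀
  have hj₀c : ((j₀:ℝ)) - c ≠ 0 := by
    simpa [eval_sub, eval_X, eval_C, sub_ne_zero] using hj₀.1
  have htpos : 0 < term Ω R₁ (p*p) j₀ := term_sq_pos hΩ h1 hj₀.2.2 hj₀.2.1
  have hDpos : 0 < D j₀ := by
    rw [hDeq j₀]
    rcases (sub_ne_zero.mp hj₀c).lt_or_gt with h | h
    · have hg : G (j₀:ℝ) - G c < 0 := sub_neg.mpr (hGmono h)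
      have hx : ((j₀:ℝ) - c) * term Ω R₁ (p*p) j₀ < 0 :=
        mul_neg_of_neg_of_pos (sub_neg.mpr h) htpos
      exact mul_pos_of_neg_of_neg hg hx
    · exact mul_pos (sub_pos.mpr (hGmono h)) (mul_pos (sub_pos.mpr h) htpos)
  have hq₂pos : 0 < chInt Ω R₂ q := by
    have htsum : ∑' j, D j = chInt Ω R₂ q - G c * chInt Ω R₁ q := by
      rw [chInt_eq_tsum_term, chInt_eq_tsum_term, ← tsum_mul_left]
      exact Summable.tsum_sub (summable_term Ω R₂ q) ((summable_term Ω R₁ q).mul_left (G c))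
    have hpos : 0 < ∑' j, D j := Summable.tsum_pos hDsum hDnonneg j₀ hDpos
    rw [htsum, hq₁, mul_zero, sub_zero] at hpos
    exact hpos
  rw [hsplit R₂] at hq₂pos
  have hcN : c * N₁ = A₁ := div_mul_cancel₀ A₁ (ne_of_gt hN₁pos)
  set N₂ := chInt Ω R₂ (p * p) with hN₂
  set A₂ := chInt Ω R₂ (X * (p * p)) with hA₂
  have h6 : 0 < N₁ * (A₂ - c * N₂) := mul_pos hN₁pos hq₂pos
  have h7 : c * N₁ * N₂ = A₁ * N₂ := by rw [hcN]
  nlinarith [h6, h7]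
end chAux

namespace chAux
lemma QF (Ω : Polynomial ℝ) (R : ℝ) (Pi : Polynomial ℝ) (t : ℕ → ℝ) (e : ℕ → Polynomial ℝ)
    (s : Finset ℕ)
    (ht : ∀ i ∈ s, ∀ j ∈ s, i ≠ j → t i ≠ t j)
    (hfac : ∀ j ∈ s, Pi = (X - C (t j)) * e j)
    (horth : ∀ j ∈ s, chInt Ω R (Pi * e j) = 0)
    (c : ℕ → ℝ) (p : Polynomial ℝ) (hp : p = ∑ j ∈ s, C (c j) * e j) :
    chInt Ω R (p * p) = ∑ j ∈ s, (c j)^2 * chInt Ω R (e j * e j) ∧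
    chInt Ω R (X * (p * p)) = ∑ j ∈ s, (c j)^2 * (t j) * chInt Ω R (e j * e j) := by
  have hXint : ∀ i ∈ s, ∀ j ∈ s, chInt Ω R (X * (e i * e j)) = t i * chInt Ω R (e i * e j) := by
    intro i hi j hj
    have hX : X * (e i * e j) = Pi * e j + C (t i) * (e i * e j) := by
      rw [hfac i hi]; ring
    rw [hX, ← chL_apply, map_add, chL_apply, chL_apply, horth j hj, chInt_Cmul, zero_add]
  have hoffdiag : ∀ i ∈ s, ∀ j ∈ s, i ≠ j → chInt Ω R (e i * e j) = 0 := by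
    intro i hi j hj hij
    have h1 := hXint i hi j hj
    have h2 := hXint j hj i hi
    rw [show e j * e i = e i * e j from mul_comm _ _] at h2
    have h3 : (t i - t j) * chInt Ω R (e i * e j) = 0 := by
      rw [sub_mul, ← h1, ← h2]; ring
    rcases mul_eq_zero.mp h3 with h | h
    · exact absurd (sub_eq_zero.mp h) (ht i hi j hj hij)
    · exact h
  have hpp : p * p = ∑ i ∈ s, ∑ j ∈ s, (c i * c j) • (e i * e j) := by
    rw [hp, Finset.sum_mul_sum]
    refine Finset.sum_congr rfl fun i _ => Finset.sum_congr rfl fun j _ => ?_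
    rw [smul_eq_C_mul, C_mul]; ring
  have expand : ∀ (F : ℕ → ℕ → Polynomial ℝ),
      chInt Ω R (∑ i ∈ s, ∑ j ∈ s, (c i * c j) • F i j)
        = ∑ i ∈ s, ∑ j ∈ s, (c i * c j) * chInt Ω R (F i j) := by
    intro F
    rw [← chL_apply, map_sum]
    refine Finset.sum_congr rfl fun i _ => ?_
    rw [map_sum]
    refine Finset.sum_congr rfl fun j _ => ?_
    rw [map_smul, chL_apply, smul_eq_mul]
  constructor
  · rw [hpp, expand]
    refine Finset.sum_congr rfl fun i hi => ?_
    rw [Finset.sum_eq_single_of_mem i hi]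
    · ring
    · intro j hj hji
      rw [hoffdiag i hi j hj (Ne.symm hji), mul_zero]
  · have hXpp : X * (p * p) = ∑ i ∈ s, ∑ j ∈ s, (c i * c j) • (X * (e i * e j)) := by
      rw [hpp, Finset.mul_sum]
      refine Finset.sum_congr rfl fun i _ => ?_
      rw [Finset.mul_sum]
      refine Finset.sum_congr rfl fun j _ => ?_
      rw [mul_smul_comm]
    rw [hXpp, expand]
    refine Finset.sum_congr rfl fun i hi => ?_
    rw [Finset.sum_eq_single_of_mem i hi]
    · rw [hXint i hi i hi]; ring
    · intro j hj hji
      rw [hXint i hi j hj, hoffdiag i hi j hj (Ne.symm hji), mul_zero, mul_zero]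
end chAux


lemma rep (v : ℕ → ℝ) (s : Finset ℕ) (hinj : Set.InjOn v ↑s) (q : Polynomial ℝ)
    (hq : q.degree < s.card) :
    ∃ c : ℕ → ℝ, q = ∑ j ∈ s, C (c j) * ∏ l ∈ s.erase j, (X - C (v l)) := by
  refine ⟨fun j => q.eval (v j) * ∏ l ∈ s.erase j, (v j - v l)⁻¹, ?_⟩
  conv_lhs => rw [Lagrange.eq_interpolate hinj hq]
  rw [Lagrange.interpolate_apply]
  refine Finset.sum_congr rfl fun j hj => ?_
  have hbasis : Lagrange.basis s v j
      = C (∏ l ∈ s.erase j, (v j - v l)⁻¹) * ∏ l ∈ s.erase j, (X - C (v l)) := by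
    unfold Lagrange.basis Lagrange.basisDivisor
    rw [Finset.prod_mul_distrib, ← map_prod]
  rw [hbasis, C_mul]
  ring


theorem statement19 (Ω : Polynomial ℝ) (hΩ : Admissible Ω) (n : ℕ) (hn : 1 ≤ n)
    (R₁ R₂ : ℝ) (hR₁ : 0 < R₁) (hR₁₂ : R₁ < R₂)
    (Pi₁ Pi₂ : Polynomial ℝ)
    (hPi₁monic : Pi₁.Monic) (hPi₁deg : Pi₁.natDegree = n)
    (hPi₂monic : Pi₂.Monic) (hPi₂deg : Pi₂.natDegree = n)
    (horth₁ : ∀ q : Polynomial ℝ, q.natDegree < n → chInt Ω R₁ (Pi₁ * q) = 0)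
    (horth₂ : ∀ q : Polynomial ℝ, q.natDegree < n → chInt Ω R₂ (Pi₂ * q) = 0)
    (lam₁ lam₂ : ℕ → ℝ)
    (hlam₁mono : ∀ i j, i < j → j < n → lam₁ i < lam₁ j)
    (hlam₂mono : ∀ i j, i < j → j < n → lam₂ i < lam₂ j)
    (hPi₁ : Pi₁ = ∏ k ∈ Finset.range n, (Polynomial.X - Polynomial.C (lam₁ k)))
    (hPi₂ : Pi₂ = ∏ k ∈ Finset.range n, (Polynomial.X - Polynomial.C (lam₂ k))) :
    ∀ k < n, lam₁ k < lam₂ k := by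
  intro k hk
  have hR₂ : 0 < R₂ := lt_trans hR₁ hR₁₂
  -- distinctness helpers
  have hdist : ∀ (lam : ℕ → ℝ), (∀ i j, i < j → j < n → lam i < lam j) →
      ∀ a, a < n → ∀ b, b < n → a ≠ b → lam a ≠ lam b := by
    intro lam hm a ha b hb hab
    rcases hab.lt_or_gt with h | h
    · exact (hm a b h hb).ne
    · exact (hm b a h ha).ne'
  -- the test polynomial
  set m₁ : Polynomial ℝ := ∏ l ∈ Finset.range k, (X - C (lam₁ l)) with hm₁
  set m₂ : Polynomial ℝ := ∏ l ∈ Finset.Ico (k+1) n, (X - C (lam₂ l)) with hm₂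
  have hm₁monic : m₁.Monic := monic_prod_of_monic _ _ fun l _ => monic_X_sub_C _
  have hm₂monic : m₂.Monic := monic_prod_of_monic _ _ fun l _ => monic_X_sub_C _
  set p : Polynomial ℝ := m₁ * m₂ with hpdef
  have hp0 : p ≠ 0 := (hm₁monic.mul hm₂monic).ne_zero
  -- the Lagrange-type families
  set e₁ : ℕ → Polynomial ℝ := fun i => ∏ l ∈ (Finset.range n).erase i, (X - C (lam₁ l))
    with he₁
  set e₂ : ℕ → Polynomial ℝ := fun j => ∏ l ∈ (Finset.range n).erase j, (X - C (lam₂ l))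
    with he₂
  -- degree bounds for the e's
  have hedeg : ∀ (lam : ℕ → ℝ) (j : ℕ), j < n →
      (∏ l ∈ (Finset.range n).erase j, (X - C (lam l))).natDegree < n := by
    intro lam j hj
    have h1 : (∏ l ∈ (Finset.range n).erase j, (X - C (lam l))).natDegree
        ≤ ∑ l ∈ (Finset.range n).erase j, (X - C (lam l)).natDegree :=
      Polynomial.natDegree_prod_le _ _
    have h2 : ∑ l ∈ (Finset.range n).erase j, (X - C (lam l)).natDegree
        = ((Finset.range n).erase j).card := by
      simp [natDegree_X_sub_C]
    have h3 : ((Finset.range n).erase j).card = n - 1 := by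
      rw [Finset.card_erase_of_mem (Finset.mem_range.mpr hj), Finset.card_range]
    omega
  -- factorization of Pi's
  have hfac₁ : ∀ i ∈ Finset.range n, Pi₁ = (X - C (lam₁ i)) * e₁ i := by
    intro i hi
    rw [hPi₁, he₁, ← Finset.mul_prod_erase _ _ hi]
  have hfac₂ : ∀ j ∈ Finset.range n, Pi₂ = (X - C (lam₂ j)) * e₂ j := by
    intro j hj
    rw [hPi₂, he₂, ← Finset.mul_prod_erase _ _ hj]
  -- representation of p in the span of e₂'s over range (k+1)
  have hrep₂ : ∃ c : ℕ → ℝ, p = ∑ j ∈ Finset.range (k+1), C (c j) * e₂ j := by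
    have hinj : Set.InjOn lam₂ ↑(Finset.range (k+1)) := by
      intro a ha b hb hab
      by_contra hne
      exact hdist lam₂ hlam₂mono a (by simp at ha; omega) b (by simp at hb; omega) hne hab
    have hdeg : m₁.degree < (Finset.range (k+1)).card := by
      rw [Finset.card_range]
      rw [← Polynomial.natDegree_lt_iff_degree_lt hm₁monic.ne_zero]
      have h1 : m₁.natDegree ≤ ∑ l ∈ Finset.range k, (X - C (lam₁ l)).natDegree :=
        Polynomial.natDegree_prod_le _ _
      have h2 : ∑ l ∈ Finset.range k, (X - C (lam₁ l)).natDegree = k := by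
        simp [natDegree_X_sub_C]
      omega
    obtain ⟨c, hc⟩ := rep lam₂ (Finset.range (k+1)) hinj m₁ hdeg
    refine ⟨c, ?_⟩
    rw [hpdef, hc, Finset.sum_mul]
    refine Finset.sum_congr rfl fun j hj => ?_
    have hjk : j < k + 1 := Finset.mem_range.mp hj
    have hdisj : Disjoint ((Finset.range (k+1)).erase j) (Finset.Ico (k+1) n) := by
      rw [Finset.disjoint_left]
      intro a ha hb
      simp only [Finset.mem_erase, Finset.mem_range] at ha
      simp only [Finset.mem_Ico] at hb
      omega
    have hunion : ((Finset.range (k+1)).erase j) ∪ Finset.Ico (k+1) n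
        = (Finset.range n).erase j := by
      ext a
      simp only [Finset.mem_union, Finset.mem_erase, Finset.mem_range, Finset.mem_Ico]
      omega
    rw [he₂]
    simp only
    rw [← hunion, Finset.prod_union hdisj, hm₂]
    ring
  -- representation of p in the span of e₁'s over Ico k n
  have hrep₁ : ∃ c : ℕ → ℝ, p = ∑ i ∈ Finset.Ico k n, C (c i) * e₁ i := by
    have hinj : Set.InjOn lam₁ ↑(Finset.Ico k n) := by
      intro a ha b hb hab
      by_contra hne
      exact hdist lam₁ hlam₁mono a (by simp at ha; omega) b (by simp at hb; omega) hne hab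
    have hdeg : m₂.degree < (Finset.Ico k n).card := by
      rw [Nat.card_Ico]
      rw [← Polynomial.natDegree_lt_iff_degree_lt hm₂monic.ne_zero]
      have h1 : m₂.natDegree ≤ ∑ l ∈ Finset.Ico (k+1) n, (X - C (lam₂ l)).natDegree :=
        Polynomial.natDegree_prod_le _ _
      have h2 : ∑ l ∈ Finset.Ico (k+1) n, (X - C (lam₂ l)).natDegree = n - (k+1) := by
        simp [natDegree_X_sub_C]
      omega
    obtain ⟨c, hc⟩ := rep lam₁ (Finset.Ico k n) hinj m₂ hdeg
    refine ⟨c, ?_⟩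
    rw [hpdef, hc, Finset.mul_sum]
    refine Finset.sum_congr rfl fun i hi => ?_
    have hik : k ≤ i ∧ i < n := Finset.mem_Ico.mp hi
    have hdisj : Disjoint ((Finset.Ico k n).erase i) (Finset.range k) := by
      rw [Finset.disjoint_left]
      intro a ha hb
      simp only [Finset.mem_erase, Finset.mem_Ico] at ha
      simp only [Finset.mem_range] at hb
      omega
    have hunion : ((Finset.Ico k n).erase i) ∪ Finset.range k
        = (Finset.range n).erase i := by
      ext a
      simp only [Finset.mem_union, Finset.mem_erase, Finset.mem_range, Finset.mem_Ico]
      omega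
    rw [he₁]
    simp only
    rw [← hunion, Finset.prod_union hdisj, hm₁]
    ring
  obtain ⟨c₂, hc₂⟩ := hrep₂
  obtain ⟨c₁, hc₁⟩ := hrep₁
  -- quadratic form identities
  have hQF₂ := chAux.QF Ω R₂ Pi₂ lam₂ e₂ (Finset.range (k+1))
    (fun i hi j hj hij => hdist lam₂ hlam₂mono i
      (by simp only [Finset.mem_range] at hi; omega) j
      (by simp only [Finset.mem_range] at hj; omega) hij)
    (fun j hj => hfac₂ j (Finset.mem_range.mpr
      (by simp only [Finset.mem_range] at hj; omega)))
    (fun j hj => horth₂ (e₂ j) (hedeg lam₂ j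
      (by simp only [Finset.mem_range] at hj; omega)))
    c₂ p hc₂
  have hQF₁ := chAux.QF Ω R₁ Pi₁ lam₁ e₁ (Finset.Ico k n)
    (fun i hi j hj hij => hdist lam₁ hlam₁mono i
      (by simp only [Finset.mem_Ico] at hi; omega) j
      (by simp only [Finset.mem_Ico] at hj; omega) hij)
    (fun i hi => hfac₁ i (Finset.mem_range.mpr
      (by simp only [Finset.mem_Ico] at hi; omega)))
    (fun i hi => horth₁ (e₁ i) (hedeg lam₁ i
      (by simp only [Finset.mem_Ico] at hi; omega)))
    c₁ p hc₁
  set N₁ := chInt Ω R₁ (p * p) with hN₁def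
  set N₂ := chInt Ω R₂ (p * p) with hN₂def
  set A₁ := chInt Ω R₁ (X * (p * p)) with hA₁def
  set A₂ := chInt Ω R₂ (X * (p * p)) with hA₂def
  have hN₁pos : 0 < N₁ := chAux.chInt_sq_pos hΩ hR₁ hp0
  have hN₂pos : 0 < N₂ := chAux.chInt_sq_pos hΩ hR₂ hp0
  -- Rayleigh bound for μ₂ : A₂ ≤ lam₂ k * N₂
  have hA₂bound : A₂ ≤ lam₂ k * N₂ := by
    rw [hQF₂.2, hQF₂.1, Finset.mul_sum]
    refine Finset.sum_le_sum fun j hj => ?_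
    have hjk : j < k + 1 := Finset.mem_range.mp hj
    have hle : lam₂ j ≤ lam₂ k := by
      rcases Nat.lt_or_ge j k with h | h
      · exact (hlam₂mono j k h hk).le
      · have : j = k := by omega
        rw [this]
    have hnn : 0 ≤ chInt Ω R₂ (e₂ j * e₂ j) := chAux.chInt_sq_nonneg hΩ hR₂.le _
    have hsq : 0 ≤ (c₂ j)^2 := sq_nonneg _
    calc (c₂ j)^2 * lam₂ j * chInt Ω R₂ (e₂ j * e₂ j)
        ≤ (c₂ j)^2 * lam₂ k * chInt Ω R₂ (e₂ j * e₂ j) := by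
          apply mul_le_mul_of_nonneg_right _ hnn
          exact mul_le_mul_of_nonneg_left hle hsq
      _ = lam₂ k * ((c₂ j)^2 * chInt Ω R₂ (e₂ j * e₂ j)) := by ring
  -- Rayleigh bound for μ₁ : lam₁ k * N₁ ≤ A₁
  have hA₁bound : lam₁ k * N₁ ≤ A₁ := by
    rw [hQF₁.2, hQF₁.1, Finset.mul_sum]
    refine Finset.sum_le_sum fun i hi => ?_
    have hik := Finset.mem_Ico.mp hi
    have hle : lam₁ k ≤ lam₁ i := by
      rcases Nat.lt_or_ge k i with h | h
      · exact (hlam₁mono k i h hik.2).le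
      · have : i = k := by omega
        rw [this]
    have hnn : 0 ≤ chInt Ω R₁ (e₁ i * e₁ i) := chAux.chInt_sq_nonneg hΩ hR₁.le _
    have hsq : 0 ≤ (c₁ i)^2 := sq_nonneg _
    calc lam₁ k * ((c₁ i)^2 * chInt Ω R₁ (e₁ i * e₁ i))
        = (c₁ i)^2 * lam₁ k * chInt Ω R₁ (e₁ i * e₁ i) := by ring
      _ ≤ (c₁ i)^2 * lam₁ i * chInt Ω R₁ (e₁ i * e₁ i) := by
          apply mul_le_mul_of_nonneg_right _ hnn
          exact mul_le_mul_of_nonneg_left hle hsq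
  -- strict cross inequality
  have hcross : A₁ * N₂ < A₂ * N₁ := chAux.cross hΩ hR₁ hR₁₂ hp0
  -- conclude
  have h1 : lam₁ k * N₁ * N₂ ≤ A₁ * N₂ := mul_le_mul_of_nonneg_right hA₁bound hN₂pos.le
  have h2 : A₂ * N₁ ≤ lam₂ k * N₂ * N₁ := mul_le_mul_of_nonneg_right hA₂bound hN₁pos.le
  have h3 : lam₁ k * (N₁ * N₂) < lam₂ k * (N₁ * N₂) := by nlinarith [h1, h2, hcross]
  exact lt_of_mul_lt_mul_right (by nlinarith [h3]) (le_of_lt (mul_pos hN₁pos hN₂pos))
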